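/- The formal system ATM proves the sentence A[L₂] → A[⊥̇]; that is, ATM proves that if the assertible liar sentence is assertible then the falsum sentence is assertible. -/

import Mathlib

namespace ATM

/-- Terms of ATM: built from ⊥̇ and constants L₁, L₂, … by the dotted
connectives ∧̇, ∨̇, →̇ and the dotted predicates Ȧ[·], Ṫ[·], Ṁ[·]. -/
inductive Term : Type
  | bot  : Term
  | L    : ℕ → Term
  | and  : Term → Term → Term
  | or   : Term → Term → Term
  | imp  : Term → Term → Term
  | A    : Term → Term
  | T    : Term → Term
  | M    : Term → Term

/-- Sentences of ATM: built from ⊥, A[t], T[t], M[t] by ∧, ∨, →. -/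
inductive Sentence : Type
  | bot  : Sentence
  | A    : Term → Sentence
  | T    : Term → Sentence
  | M    : Term → Sentence
  | and  : Sentence → Sentence → Sentence
  | or   : Sentence → Sentence → Sentence
  | imp  : Sentence → Sentence → Sentence

/-- ¬̇t abbreviates t →̇ ⊥̇. -/
def Term.neg (t : Term) : Term := Term.imp t Term.bot

/-- s ↔̇ t abbreviates (s →̇ t) ∧̇ (t →̇ s). -/
def Term.iff (s t : Term) : Term := Term.and (Term.imp s t) (Term.imp t s)

/-- ¬φ abbreviates φ → ⊥. -/
def Sentence.neg (φ : Sentence) : Sentence := Sentence.imp φ Sentence.bot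

/-- φ ↔ ψ abbreviates (φ → ψ) ∧ (ψ → φ). -/
def Sentence.iff (φ ψ : Sentence) : Sentence :=
  Sentence.and (Sentence.imp φ ψ) (Sentence.imp ψ φ)

/-- The canonical term φ̇ of a sentence φ, obtained by dotting every symbol. -/
def Sentence.dot : Sentence → Term
  | Sentence.bot     => Term.bot
  | Sentence.A t     => Term.A t
  | Sentence.T t     => Term.T t
  | Sentence.M t     => Term.M t
  | Sentence.and φ ψ => Term.and φ.dot ψ.dot
  | Sentence.or φ ψ  => Term.or φ.dot ψ.dot
  | Sentence.imp φ ψ => Term.imp φ.dot ψ.dot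

/-- Evaluation t̂ of a term t to a sentence, relative to an assignment
θ of a sentence θᵢ to each constant Lᵢ.  (The θᵢ may be chosen in any
manner; the theorems below hypothesize θ₁ = ¬T[L₁] and θ₂ = ¬A[L₂].) -/
def Term.eval (θ : ℕ → Sentence) : Term → Sentence
  | Term.bot     => Sentence.bot
  | Term.L i     => θ i
  | Term.A t     => Sentence.A t
  | Term.T t     => Sentence.T t
  | Term.M t     => Sentence.M t
  | Term.and s t => Sentence.and (s.eval θ) (t.eval θ)
  | Term.or s t  => Sentence.or (s.eval θ) (t.eval θ)
  | Term.imp s t => Sentence.imp (s.eval θ) (t.eval θ)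

/-- Grounded sentences: the smallest set of sentences containing ⊥, all A[t]
and all M[t], closed under ∧, ∨, →, and containing T[t] whenever t̂ is in
the set. -/
inductive Grounded (θ : ℕ → Sentence) : Sentence → Prop
  | bot : Grounded θ Sentence.bot
  | A (t : Term) : Grounded θ (Sentence.A t)
  | M (t : Term) : Grounded θ (Sentence.M t)
  | and {φ ψ : Sentence} : Grounded θ φ → Grounded θ ψ → Grounded θ (Sentence.and φ ψ)
  | or {φ ψ : Sentence} : Grounded θ φ → Grounded θ ψ → Grounded θ (Sentence.or φ ψ)
  | imp {φ ψ : Sentence} : Grounded θ φ → Grounded θ ψ → Grounded θ (Sentence.imp φ ψ)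
  | T {t : Term} : Grounded θ (t.eval θ) → Grounded θ (Sentence.T t)

/-- `HilbertAxT s t u a` : the term `a` is the instance `Ȧ(s,t,u)` at the
terms `s`, `t`, `u` of one of the axiom schemes `A` of a fixed standard
Hilbert-style axiomatization of intuitionistic propositional logic. -/
inductive HilbertAxT : Term → Term → Term → Term → Prop
  | imp1 (s t u : Term) : HilbertAxT s t u (Term.imp s (Term.imp t s))
  | imp2 (s t u : Term) : HilbertAxT s t u
      (Term.imp (Term.imp s (Term.imp t u))
        (Term.imp (Term.imp s t) (Term.imp s u)))
  | andE1 (s t u : Term) : HilbertAxT s t u (Term.imp (Term.and s t) s)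
  | andE2 (s t u : Term) : HilbertAxT s t u (Term.imp (Term.and s t) t)
  | andI (s t u : Term) : HilbertAxT s t u (Term.imp s (Term.imp t (Term.and s t)))
  | orI1 (s t u : Term) : HilbertAxT s t u (Term.imp s (Term.or s t))
  | orI2 (s t u : Term) : HilbertAxT s t u (Term.imp t (Term.or s t))
  | orE (s t u : Term) : HilbertAxT s t u
      (Term.imp (Term.imp s u)
        (Term.imp (Term.imp t u) (Term.imp (Term.or s t) u)))
  | exfalso (s t u : Term) : HilbertAxT s t u (Term.imp Term.bot s)

/-- Theorems of ATM: the axioms (logical axioms and nonlogical schemes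
(1)–(9)) closed under the three deduction rules (conjunction, modus
ponens, release). -/
inductive Thm (θ : ℕ → Sentence) : Sentence → Prop
  -- logical axioms: (M[s] ∧ M[t] ∧ M[u]) → A[Ȧ(s,t,u)]
  | logical {s t u a : Term} (h : HilbertAxT s t u a) :
      Thm θ (Sentence.imp
        (Sentence.and (Sentence.and (Sentence.M s) (Sentence.M t)) (Sentence.M u))
        (Sentence.A a))
  -- (1) M[t] for t̂ grounded
  | ax1 {t : Term} (h : Grounded θ (t.eval θ)) : Thm θ (Sentence.M t)
  -- (2) (M[s] ∧ M[t]) ↔ M[s ∧̇ t] ↔ M[s ∨̇ t] ↔ M[s →̇ t]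
  | ax2and (s t : Term) :
      Thm θ (Sentence.iff (Sentence.and (Sentence.M s) (Sentence.M t))
        (Sentence.M (Term.and s t)))
  | ax2or (s t : Term) :
      Thm θ (Sentence.iff (Sentence.and (Sentence.M s) (Sentence.M t))
        (Sentence.M (Term.or s t)))
  | ax2imp (s t : Term) :
      Thm θ (Sentence.iff (Sentence.and (Sentence.M s) (Sentence.M t))
        (Sentence.M (Term.imp s t)))
  -- (3) A[t] → M[t]
  | ax3 (t : Term) : Thm θ (Sentence.imp (Sentence.A t) (Sentence.M t))
  -- (4) (A[s] ∧ A[t]) → A[s ∧̇ t]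
  | ax4 (s t : Term) :
      Thm θ (Sentence.imp (Sentence.and (Sentence.A s) (Sentence.A t))
        (Sentence.A (Term.and s t)))
  -- (5) (A[s] ∧ A[s →̇ t]) → A[t]
  | ax5 (s t : Term) :
      Thm θ (Sentence.imp (Sentence.and (Sentence.A s) (Sentence.A (Term.imp s t)))
        (Sentence.A t))
  -- (6) M[t] → A[t →̇ Ȧ[t]]
  | ax6 (t : Term) :
      Thm θ (Sentence.imp (Sentence.M t) (Sentence.A (Term.imp t (Term.A t))))
  -- (7) M[t] → A[t ↔̇ Ṫ[t]]
  | ax7 (t : Term) :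
      Thm θ (Sentence.imp (Sentence.M t) (Sentence.A (Term.iff t (Term.T t))))
  -- (8) ¬M[t] → A[¬̇Ṫ[t]]
  | ax8 (t : Term) :
      Thm θ (Sentence.imp (Sentence.neg (Sentence.M t))
        (Sentence.A (Term.neg (Term.T t))))
  -- (9) M[t] → A[t ↔̇ t'] whenever t̂ = t̂'
  | ax9 {t t' : Term} (h : t.eval θ = t'.eval θ) :
      Thm θ (Sentence.imp (Sentence.M t) (Sentence.A (Term.iff t t')))
  -- deduction rules
  | conj {φ ψ : Sentence} : Thm θ φ → Thm θ ψ → Thm θ (Sentence.and φ ψ)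
  | mp {φ ψ : Sentence} : Thm θ φ → Thm θ (Sentence.imp φ ψ) → Thm θ ψ
  | release {t : Term} : Thm θ (Sentence.A t) → Thm θ (t.eval θ)

/-- θ₁ is the classical liar sentence ¬T[L₁]. -/
def liar1 : Sentence := Sentence.neg (Sentence.T (Term.L 1))

/-- θ₂ is the assertible liar sentence ¬A[L₂]. -/
def liar2 : Sentence := Sentence.neg (Sentence.A (Term.L 2))

/-- "Nice" terms: built from ⊥̇, L₂ and the dotted predicates Ȧ[·], Ṁ[·]
by the connectives.  All nice terms have grounded evaluation. -/
inductive NiceT : Term → Prop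
  | bot : NiceT Term.bot
  | L2 : NiceT (Term.L 2)
  | A (t : Term) : NiceT (Term.A t)
  | M (t : Term) : NiceT (Term.M t)
  | and {s t : Term} : NiceT s → NiceT t → NiceT (Term.and s t)
  | or {s t : Term} : NiceT s → NiceT t → NiceT (Term.or s t)
  | imp {s t : Term} : NiceT s → NiceT t → NiceT (Term.imp s t)

lemma nice_grounded {θ : ℕ → Sentence} (h2 : θ 2 = liar2) {t : Term}
    (h : NiceT t) : Grounded θ (t.eval θ) := by
  induction h with
  | bot => exact Grounded.bot
  | L2 =>
      show Grounded θ (θ 2)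
      rw [h2]
      exact Grounded.imp (Grounded.A _) Grounded.bot
  | A t => exact Grounded.A t
  | M t => exact Grounded.M t
  | and _ _ ih1 ih2 => exact Grounded.and ih1 ih2
  | or _ _ ih1 ih2 => exact Grounded.or ih1 ih2
  | imp _ _ ih1 ih2 => exact Grounded.imp ih1 ih2

lemma hax_nice {s t u a : Term} (h : HilbertAxT s t u a)
    (ns : NiceT s) (nt : NiceT t) (nu : NiceT u) : NiceT a := by
  cases h <;> repeat (first | assumption | constructor)

/-- Internal derivability (within the assertibility predicate) from a list of
hypotheses, restricted to nice terms. -/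
inductive IDer (θ : ℕ → Sentence) (Γ : List Term) : Term → Prop
  | hyp {a : Term} : a ∈ Γ → IDer θ Γ a
  | ext {a : Term} : NiceT a → Thm θ (Sentence.A a) → IDer θ Γ a
  | hax {s t u a : Term} : HilbertAxT s t u a → NiceT s → NiceT t → NiceT u →
      IDer θ Γ a
  | mp {a b : Term} : NiceT a → NiceT b → IDer θ Γ a →
      IDer θ Γ (Term.imp a b) → IDer θ Γ b

lemma IDer.sound {θ : ℕ → Sentence} (h2 : θ 2 = liar2) {a : Term}
    (h : IDer θ [] a) : Thm θ (Sentence.A a) := by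
  induction h with
  | hyp h => simp at h
  | ext _ h => exact h
  | hax h ns nt nu =>
      exact Thm.mp
        (Thm.conj (Thm.conj (Thm.ax1 (nice_grounded h2 ns))
          (Thm.ax1 (nice_grounded h2 nt))) (Thm.ax1 (nice_grounded h2 nu)))
        (Thm.logical h)
  | mp _ _ _ _ ih1 ih2 => exact Thm.mp (Thm.conj ih1 ih2) (Thm.ax5 _ _)

lemma IDer.iK {θ : ℕ → Sentence} {Γ : List Term} {a b : Term}
    (na : NiceT a) (nb : NiceT b) : IDer θ Γ (Term.imp a (Term.imp b a)) :=
  IDer.hax (HilbertAxT.imp1 a b b) na nb nb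

lemma IDer.iS {θ : ℕ → Sentence} {Γ : List Term} {a b c : Term}
    (na : NiceT a) (nb : NiceT b) (nc : NiceT c) :
    IDer θ Γ (Term.imp (Term.imp a (Term.imp b c))
      (Term.imp (Term.imp a b) (Term.imp a c))) :=
  IDer.hax (HilbertAxT.imp2 a b c) na nb nc

lemma IDer.iI {θ : ℕ → Sentence} {Γ : List Term} {a : Term} (na : NiceT a) :
    IDer θ Γ (Term.imp a a) := by
  have naa : NiceT (Term.imp a a) := NiceT.imp na na
  have k1 : IDer θ Γ (Term.imp a (Term.imp (Term.imp a a) a)) := IDer.iK na naa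
  have s : IDer θ Γ (Term.imp (Term.imp a (Term.imp (Term.imp a a) a))
      (Term.imp (Term.imp a (Term.imp a a)) (Term.imp a a))) := IDer.iS na naa na
  have k2 : IDer θ Γ (Term.imp a (Term.imp a a)) := IDer.iK na na
  exact IDer.mp (NiceT.imp na naa) naa k2
    (IDer.mp (NiceT.imp na (NiceT.imp naa na)) (NiceT.imp (NiceT.imp na naa) naa)
      k1 s)

/-- Deduction theorem for the internal calculus. -/
lemma IDer.ded {θ : ℕ → Sentence} {Γ : List Term} {h : Term}
    (nh : NiceT h) (hΓ : ∀ x ∈ Γ, NiceT x) {a : Term}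
    (d : IDer θ (h :: Γ) a) : IDer θ Γ (Term.imp h a) := by
  induction d with
  | @hyp a hm =>
      rcases List.mem_cons.mp hm with rfl | hm
      · exact IDer.iI nh
      · exact IDer.mp (hΓ _ hm) (NiceT.imp nh (hΓ _ hm)) (IDer.hyp hm)
          (IDer.iK (hΓ _ hm) nh)
  | @ext a na ht =>
      exact IDer.mp na (NiceT.imp nh na) (IDer.ext na ht) (IDer.iK na nh)
  | @hax s t u a hx ns nt nu =>
      have na := hax_nice hx ns nt nu
      exact IDer.mp na (NiceT.imp nh na) (IDer.hax hx ns nt nu) (IDer.iK na nh)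
  | @mp a b na nb _ _ ih1 ih2 =>
      exact IDer.mp (NiceT.imp nh na) (NiceT.imp nh nb) ih1
        (IDer.mp (NiceT.imp nh (NiceT.imp na nb))
          (NiceT.imp (NiceT.imp nh na) (NiceT.imp nh nb)) ih2 (IDer.iS nh na nb))

theorem atm_proves_assert_liar_implies_assert_falsum (θ : ℕ → Sentence)
    (h1 : θ 1 = liar1) (h2 : θ 2 = liar2) :
    Thm θ (Sentence.imp (Sentence.A (Term.L 2)) (Sentence.A Term.bot)) := by
  -- abbreviations: p = Ȧ[L₂], q = Ȧ[⊥̇], r = Ȧ[¬̇L₂], x = (p ∧̇ r) →̇ q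
  have np : NiceT (Term.A (Term.L 2)) := NiceT.A _
  have nq : NiceT (Term.A Term.bot) := NiceT.A _
  have nr : NiceT (Term.A (Term.neg (Term.L 2))) := NiceT.A _
  have nL : NiceT (Term.L 2) := NiceT.L2
  have nnp : NiceT (Term.neg (Term.A (Term.L 2))) := NiceT.imp np NiceT.bot
  have nx : NiceT (Term.imp (Term.and (Term.A (Term.L 2))
      (Term.A (Term.neg (Term.L 2)))) (Term.A Term.bot)) :=
    NiceT.imp (NiceT.and np nr) nq
  -- M[L₂]
  have hM : Thm θ (Sentence.M (Term.L 2)) := Thm.ax1 (nice_grounded h2 NiceT.L2)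
  -- A[L₂ ↔̇ ¬̇Ȧ[L₂]]  (axiom 9, since L₂ and ¬̇Ȧ[L₂] evaluate to the same sentence)
  have heq : (Term.L 2).eval θ = (Term.neg (Term.A (Term.L 2))).eval θ := by
    show θ 2 = _
    rw [h2]; rfl
  have h9 : Thm θ (Sentence.A (Term.iff (Term.L 2)
      (Term.neg (Term.A (Term.L 2))))) := Thm.mp hM (Thm.ax9 heq)
  -- A[L₂ →̇ Ȧ[L₂]]  (axiom 6)
  have h6 : Thm θ (Sentence.A (Term.imp (Term.L 2) (Term.A (Term.L 2)))) :=
    Thm.mp hM (Thm.ax6 (Term.L 2))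
  have n1 : NiceT (Term.imp (Term.L 2) (Term.neg (Term.A (Term.L 2)))) :=
    NiceT.imp nL nnp
  have n2 : NiceT (Term.imp (Term.neg (Term.A (Term.L 2))) (Term.L 2)) :=
    NiceT.imp nnp nL
  -- internal derivation of ⊥̇ from L₂
  have dbot : IDer θ [Term.L 2] Term.bot := by
    have hypL : IDer θ [Term.L 2] (Term.L 2) := IDer.hyp List.mem_cons_self
    have e9 : IDer θ [Term.L 2] (Term.and
        (Term.imp (Term.L 2) (Term.neg (Term.A (Term.L 2))))
        (Term.imp (Term.neg (Term.A (Term.L 2))) (Term.L 2))) :=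
      IDer.ext (NiceT.and n1 n2) h9
    have eAndE1 : IDer θ [Term.L 2] (Term.imp (Term.and
        (Term.imp (Term.L 2) (Term.neg (Term.A (Term.L 2))))
        (Term.imp (Term.neg (Term.A (Term.L 2))) (Term.L 2)))
        (Term.imp (Term.L 2) (Term.neg (Term.A (Term.L 2))))) :=
      IDer.hax (HilbertAxT.andE1 _ _ Term.bot) n1 n2 NiceT.bot
    have c1 : IDer θ [Term.L 2]
        (Term.imp (Term.L 2) (Term.neg (Term.A (Term.L 2)))) :=
      IDer.mp (NiceT.and n1 n2) n1 e9 eAndE1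
    have e6 : IDer θ [Term.L 2] (Term.imp (Term.L 2) (Term.A (Term.L 2))) :=
      IDer.ext (NiceT.imp nL np) h6
    have hp : IDer θ [Term.L 2] (Term.A (Term.L 2)) := IDer.mp nL np hypL e6
    have hnp : IDer θ [Term.L 2] (Term.neg (Term.A (Term.L 2))) :=
      IDer.mp nL nnp hypL c1
    exact IDer.mp np NiceT.bot hp hnp
  -- hence ATM asserts ¬̇L₂
  have dnegL : IDer θ [] (Term.neg (Term.L 2)) :=
    IDer.ded nL (by simp) dbot
  have hA : Thm θ (Sentence.A (Term.neg (Term.L 2))) := IDer.sound h2 dnegL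
  -- internal tautology:  r →̇ (((p ∧̇ r) →̇ q) →̇ (p →̇ q))
  have dq : IDer θ [Term.A (Term.L 2),
      Term.imp (Term.and (Term.A (Term.L 2)) (Term.A (Term.neg (Term.L 2))))
        (Term.A Term.bot),
      Term.A (Term.neg (Term.L 2))] (Term.A Term.bot) := by
    have hp : IDer θ [Term.A (Term.L 2),
      Term.imp (Term.and (Term.A (Term.L 2)) (Term.A (Term.neg (Term.L 2))))
        (Term.A Term.bot),
      Term.A (Term.neg (Term.L 2))] (Term.A (Term.L 2)) := IDer.hyp List.mem_cons_self
    have hr : IDer θ [Term.A (Term.L 2),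
      Term.imp (Term.and (Term.A (Term.L 2)) (Term.A (Term.neg (Term.L 2))))
        (Term.A Term.bot),
      Term.A (Term.neg (Term.L 2))] (Term.A (Term.neg (Term.L 2))) := IDer.hyp
      (List.mem_cons_of_mem _ (List.mem_cons_of_mem _ List.mem_cons_self))
    have hx : IDer θ [Term.A (Term.L 2),
      Term.imp (Term.and (Term.A (Term.L 2)) (Term.A (Term.neg (Term.L 2))))
        (Term.A Term.bot),
      Term.A (Term.neg (Term.L 2))] (Term.imp (Term.and (Term.A (Term.L 2))
        (Term.A (Term.neg (Term.L 2)))) (Term.A Term.bot)) := IDer.hyp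
      (List.mem_cons_of_mem _ List.mem_cons_self)
    have hAndI : IDer θ [Term.A (Term.L 2),
      Term.imp (Term.and (Term.A (Term.L 2)) (Term.A (Term.neg (Term.L 2))))
        (Term.A Term.bot),
      Term.A (Term.neg (Term.L 2))] (Term.imp (Term.A (Term.L 2))
        (Term.imp (Term.A (Term.neg (Term.L 2)))
          (Term.and (Term.A (Term.L 2)) (Term.A (Term.neg (Term.L 2)))))) :=
      IDer.hax (HilbertAxT.andI _ _ Term.bot) np nr NiceT.bot
    have s1 := IDer.mp np (NiceT.imp nr (NiceT.and np nr)) hp hAndI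
    have s2 := IDer.mp nr (NiceT.and np nr) hr s1
    exact IDer.mp (NiceT.and np nr) nq s2 hx
  have d1 := IDer.ded np (by
    intro y hy
    rcases List.mem_cons.mp hy with rfl | hy
    · exact nx
    · rcases List.mem_cons.mp hy with rfl | hy
      · exact nr
      · simp at hy) dq
  have d2 := IDer.ded nx (by
    intro y hy
    rcases List.mem_cons.mp hy with rfl | hy
    · exact nr
    · simp at hy) d1
  have d3 := IDer.ded nr (by intro y hy; simp at hy) d2
  have hW := IDer.sound h2 d3
  have rel : Thm θ (Sentence.imp (Sentence.A (Term.neg (Term.L 2)))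
      (Sentence.imp
        (Sentence.imp (Sentence.and (Sentence.A (Term.L 2))
          (Sentence.A (Term.neg (Term.L 2)))) (Sentence.A Term.bot))
        (Sentence.imp (Sentence.A (Term.L 2)) (Sentence.A Term.bot)))) :=
    Thm.release hW
  have step := Thm.mp hA rel
  exact Thm.mp (Thm.ax5 (Term.L 2) Term.bot) step

end ATM
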